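/- Let φ(t) = E[e^{−t(1−W)}] with W ∈ (0,1) a.s. and ν = E|log(1−W)| = ∞. Then the function t ↦ ∫_1^t φ(u)/u du is slowly varying at infinity and tends to +∞ as t → ∞. -/

import Mathlib

open MeasureTheory ProbabilityTheory Filter Set Real

theorem integral_phi_slowly_varying
    {Ω : Type*} [MeasureSpace Ω] [IsProbabilityMeasure (ℙ : Measure Ω)]
    (W : Ω → ℝ) (hmeas : Measurable W)
    (hval : ∀ᵐ ω ∂ℙ, W ω ∈ Set.Ioo (0 : ℝ) 1)
    (hν : ¬ Integrable (fun ω => Real.log (1 - W ω)) ℙ)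
    (φ : ℝ → ℝ) (hφ : ∀ t, φ t = ∫ ω, Real.exp (-(t * (1 - W ω))) ∂ℙ) :
    Tendsto (fun t : ℝ => ∫ u in Set.Ioc (1 : ℝ) t, φ u / u) atTop atTop ∧
    ∀ lam > (0 : ℝ),
      Tendsto (fun t : ℝ =>
          (∫ u in Set.Ioc (1 : ℝ) (lam * t), φ u / u) / ∫ u in Set.Ioc (1 : ℝ) t, φ u / u)
        atTop (nhds 1) := by
  -- basic a.e. facts
  have hW : ∀ᵐ ω ∂ℙ, 0 < 1 - W ω ∧ 1 - W ω < 1 := by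
    filter_upwards [hval] with ω ⟨h0, h1⟩
    constructor <;> linarith
  -- measurability of the integrand
  have hmeas_exp : ∀ t : ℝ, Measurable fun ω => Real.exp (-(t * (1 - W ω))) := by
    intro t
    exact (((measurable_const.sub hmeas).const_mul t).neg).exp
  -- integrability of the integrand
  have hint : ∀ t : ℝ, Integrable (fun ω => Real.exp (-(t * (1 - W ω)))) ℙ := by
    intro t
    refine Integrable.mono' (integrable_const (Real.exp |t|)) (hmeas_exp t).aestronglyMeasurable ?_
    filter_upwards [hW] with ω ⟨h0, h1⟩
    rw [Real.norm_eq_abs, abs_of_pos (Real.exp_pos _)]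
    apply Real.exp_le_exp.2
    have : |t * (1 - W ω)| ≤ |t| := by
      rw [abs_mul]
      nlinarith [abs_nonneg t, abs_of_pos h0]
    cases abs_le.1 this with
    | intro h h' => linarith
  -- positivity of φ
  have hφ_pos : ∀ t : ℝ, 0 < φ t := by
    intro t
    rw [hφ t]
    have h1 : ∫ (_ : Ω), Real.exp (-|t|) ∂ℙ = Real.exp (-|t|) := by
      simp
    have : Real.exp (-|t|) ≤ ∫ ω, Real.exp (-(t * (1 - W ω))) ∂ℙ := by
      rw [← h1]
      refine integral_mono_ae (integrable_const _) (hint t) ?_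
      filter_upwards [hW] with ω ⟨h0, h1⟩
      apply Real.exp_le_exp.2
      have : |t * (1 - W ω)| ≤ |t| := by
        rw [abs_mul]
        nlinarith [abs_nonneg t, abs_of_pos h0]
      cases abs_le.1 this with
      | intro h h' => linarith
    linarith [Real.exp_pos (-|t|)]
  -- φ ≤ 1 for nonneg arguments
  have hφ_le_one : ∀ t : ℝ, 0 ≤ t → φ t ≤ 1 := by
    intro t ht
    rw [hφ t]
    have h2 : ∫ ω, Real.exp (-(t * (1 - W ω))) ∂ℙ ≤ ∫ (_ : Ω), (1:ℝ) ∂ℙ := by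
      refine integral_mono_ae (hint t) (integrable_const _) ?_
      filter_upwards [hW] with ω ⟨h0, h1⟩
      have : 0 ≤ t * (1 - W ω) := mul_nonneg ht (le_of_lt h0)
      calc Real.exp (-(t * (1 - W ω))) ≤ Real.exp 0 := Real.exp_le_exp.2 (by linarith)
      _ = 1 := Real.exp_zero
    simpa using h2
  -- antitone
  have hφ_anti : Antitone φ := by
    intro s t hst
    rw [hφ s, hφ t]
    refine integral_mono_ae (hint t) (hint s) ?_
    filter_upwards [hW] with ω ⟨h0, h1⟩
    apply Real.exp_le_exp.2
    have := mul_le_mul_of_nonneg_right hst (le_of_lt h0)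
    linarith
  have hφ_meas : Measurable φ := hφ_anti.measurable
  set g : ℝ → ℝ := fun u => φ u / u with hg_def
  have hg_meas : Measurable g := hφ_meas.div measurable_id
  -- g is nonneg and ≤ 1 on Ioc 1 t
  have hg_nonneg : ∀ u ∈ Set.Ioi (0:ℝ), 0 ≤ g u := fun u hu =>
    div_nonneg (le_of_lt (hφ_pos u)) (le_of_lt hu)
  have hg_le_one : ∀ u ∈ Set.Ioi (1:ℝ), g u ≤ 1 := by
    intro u hu
    have hu1 : (1:ℝ) < u := hu
    rw [hg_def]
    have hu0 : (0:ℝ) < u := lt_trans one_pos hu1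
    rw [div_le_one hu0]
    have := hφ_le_one u (by linarith)
    linarith
  -- integrability of g on Ioc 1 t
  have hg_int : ∀ t : ℝ, IntegrableOn g (Set.Ioc 1 t) := by
    intro t
    refine Integrable.mono'
      (integrableOn_const measure_Ioc_lt_top.ne :
        IntegrableOn (fun _ => (1:ℝ)) (Set.Ioc 1 t) volume)
      hg_meas.aestronglyMeasurable ?_
    rw [ae_restrict_iff' measurableSet_Ioc]
    refine Eventually.of_forall fun u hu => ?_
    rw [Real.norm_eq_abs, abs_of_nonneg (hg_nonneg u (by exact lt_trans one_pos hu.1))]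
    exact hg_le_one u hu.1
  set L : ℝ → ℝ := fun t => ∫ u in Set.Ioc (1:ℝ) t, g u with hL_def
  have hL_mono : Monotone L := by
    intro s t hst
    refine setIntegral_mono_set (hg_int t) ?_ (HasSubset.Subset.eventuallyLE (Set.Ioc_subset_Ioc_right hst))
    rw [EventuallyLE, ae_restrict_iff' measurableSet_Ioc]
    exact Eventually.of_forall fun u hu => hg_nonneg u (lt_trans one_pos hu.1)
  -- divergence
  have hone_div_int : ∀ a b : ℝ, 1 ≤ a → a ≤ b → IntegrableOn (fun u => 1/u) (Set.Ioc a b) := by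
    intro a b ha hab
    rw [← intervalIntegrable_iff_integrableOn_Ioc_of_le hab]
    refine ContinuousOn.intervalIntegrable ?_
    refine continuousOn_const.div continuousOn_id fun x hx => ?_
    rw [Set.uIcc_of_le hab] at hx
    have h1 := hx.1
    intro h; rw [h] at h1; linarith
  have hL_unbounded : ∀ C : ℝ, ∃ t : ℝ, C ≤ L t := by
    by_contra hcon
    push_neg at hcon
    obtain ⟨C, hC⟩ := hcon
    set F : ℝ → Ω → ENNReal := fun u ω => ENNReal.ofReal (Real.exp (-(u * (1 - W ω))) / u)
      with hF_def
    have hFmeas : Measurable (Function.uncurry F) := by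
      apply Measurable.ennreal_ofReal
      exact ((measurable_fst.mul (measurable_const.sub (hmeas.comp measurable_snd))).neg.exp).div
        measurable_fst
    have claim_inner : ∀ u : ℝ, 0 < u → (∫⁻ ω, F u ω ∂ℙ) = ENNReal.ofReal (g u) := by
      intro u hu
      have h1 : g u = ∫ ω, Real.exp (-(u * (1 - W ω))) / u ∂ℙ := by
        rw [hg_def]
        simp only
        rw [hφ u, integral_div]
      rw [h1]
      exact (ofReal_integral_eq_lintegral_ofReal ((hint u).div_const u)
        (Eventually.of_forall fun ω => div_nonneg (Real.exp_nonneg _) hu.le)).symm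
    have claim_Ioc : ∀ t : ℝ, (∫⁻ u in Set.Ioc 1 t, ENNReal.ofReal (g u)) ≤ ENNReal.ofReal C := by
      intro t
      have h1 : ENNReal.ofReal (L t) = ∫⁻ u in Set.Ioc 1 t, ENNReal.ofReal (g u) := by
        refine ofReal_integral_eq_lintegral_ofReal (hg_int t) ?_
        rw [EventuallyLE, ae_restrict_iff' measurableSet_Ioc]
        exact Eventually.of_forall fun u hu => hg_nonneg u (lt_trans one_pos hu.1)
      rw [← h1]
      exact ENNReal.ofReal_le_ofReal (hC t).le
    have claim_Ioi : (∫⁻ u in Set.Ioi 1, ENNReal.ofReal (g u)) ≤ ENNReal.ofReal C := by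
      set G : ℝ → ENNReal := fun u => ENNReal.ofReal (g u) with hG_def
      have hGmeas : Measurable G := hg_meas.ennreal_ofReal
      set fn : ℕ → ℝ → ENNReal := fun n u => (Set.Ioc (1:ℝ) (1 + n)).indicator G u with hfn_def
      have hfnmeas : ∀ n, Measurable (fn n) := fun n => hGmeas.indicator measurableSet_Ioc
      have hfnmono : Monotone fn := by
        intro m n hmn
        intro u
        refine Set.indicator_le_indicator_of_subset (Set.Ioc_subset_Ioc_right ?_)
          (fun a => zero_le) u
        exact add_le_add_right (Nat.cast_le.2 hmn) 1
      have hsup : ∀ u, (⨆ n, fn n u) = (Set.Ioi (1:ℝ)).indicator G u := by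
        intro u
        by_cases hu : u ∈ Set.Ioi (1:ℝ)
        · rw [Set.indicator_of_mem hu]
          refine le_antisymm (iSup_le fun n => ?_) ?_
          · by_cases h : u ∈ Set.Ioc (1:ℝ) (1 + n)
            · rw [hfn_def]
              simp only
              rw [Set.indicator_of_mem h]
            · rw [hfn_def]
              simp only
              rw [Set.indicator_of_notMem h]
              exact zero_le
          · obtain ⟨n, hn⟩ := exists_nat_ge (u - 1)
            have hu1 : (1:ℝ) < u := hu
            have hmem : u ∈ Set.Ioc (1:ℝ) (1 + n) := ⟨hu1, by linarith⟩
            calc G u = fn n u := by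
                  rw [hfn_def]
                  simp only
                  rw [Set.indicator_of_mem hmem]
            _ ≤ ⨆ n, fn n u := le_iSup (fun n => fn n u) n
        · rw [Set.indicator_of_notMem hu]
          refine le_antisymm (iSup_le fun n => ?_) zero_le
          have hnm : u ∉ Set.Ioc (1:ℝ) (1 + n) := fun h => hu (Set.mem_Ioi.2 h.1)
          rw [hfn_def]
          simp only
          rw [Set.indicator_of_notMem hnm]
      calc (∫⁻ u in Set.Ioi 1, G u) = ∫⁻ u, (Set.Ioi (1:ℝ)).indicator G u :=
            (lintegral_indicator measurableSet_Ioi _).symm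
      _ = ∫⁻ u, ⨆ n, fn n u := (lintegral_congr hsup).symm
      _ = ⨆ n, ∫⁻ u, fn n u := lintegral_iSup hfnmeas hfnmono
      _ ≤ ENNReal.ofReal C := by
          refine iSup_le fun n => ?_
          rw [hfn_def]
          simp only
          rw [lintegral_indicator measurableSet_Ioc]
          exact claim_Ioc _
    have tonelli : (∫⁻ u in Set.Ioi 1, ∫⁻ ω, F u ω ∂ℙ) = ∫⁻ ω, (∫⁻ u in Set.Ioi 1, F u ω) ∂ℙ :=
      lintegral_lintegral_swap hFmeas.aemeasurable
    have lhs_eq : (∫⁻ u in Set.Ioi 1, ∫⁻ ω, F u ω ∂ℙ) = ∫⁻ u in Set.Ioi 1, ENNReal.ofReal (g u) := by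
      refine setLIntegral_congr_fun measurableSet_Ioi (fun u hu => ?_)
      exact claim_inner u (lt_trans one_pos hu)
    have pointwise : ∀ᵐ ω ∂ℙ,
        ENNReal.ofReal (Real.exp (-1) * Real.log (1/(1 - W ω))) ≤ ∫⁻ u in Set.Ioi 1, F u ω := by
      filter_upwards [hW] with ω ⟨h0, h1⟩
      set x := 1 - W ω with hx_def
      set b := 1/x with hb_def
      have hb1 : 1 < b := by
        rw [hb_def, lt_div_iff₀ h0]
        linarith
      have step1 : (∫⁻ u in Set.Ioc 1 b, ENNReal.ofReal (Real.exp (-1) * (1/u)))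
          ≤ ∫⁻ u in Set.Ioc 1 b, F u ω := by
        refine setLIntegral_mono' measurableSet_Ioc fun u hu => ?_
        refine ENNReal.ofReal_le_ofReal ?_
        have hu0 : (0:ℝ) < u := lt_trans one_pos hu.1
        have hux : u * x ≤ 1 := by
          have h2 : u ≤ b := hu.2
          rw [hb_def, le_div_iff₀ h0] at h2
          linarith
        have hee : Real.exp (-1) ≤ Real.exp (-(u * x)) := Real.exp_le_exp.2 (by linarith)
        calc Real.exp (-1) * (1/u) = Real.exp (-1) / u := by ring
        _ ≤ Real.exp (-(u*x)) / u := (div_le_div_iff_of_pos_right hu0).2 hee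
      have step2 : (∫⁻ u in Set.Ioc 1 b, ENNReal.ofReal (Real.exp (-1) * (1/u)))
          = ENNReal.ofReal (Real.exp (-1) * Real.log b) := by
        rw [← ofReal_integral_eq_lintegral_ofReal ((hone_div_int 1 b le_rfl hb1.le).const_mul _)]
        · congr 1
          rw [MeasureTheory.integral_const_mul, ← intervalIntegral.integral_of_le hb1.le,
            integral_one_div_of_pos one_pos (by linarith), div_one]
        · rw [EventuallyLE, ae_restrict_iff' measurableSet_Ioc]
          refine Eventually.of_forall fun u hu => ?_
          have hu0 : (0:ℝ) < u := lt_trans one_pos hu.1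
          positivity
      calc ENNReal.ofReal (Real.exp (-1) * Real.log (1/x))
          = ENNReal.ofReal (Real.exp (-1) * Real.log b) := by rw [hb_def]
      _ = ∫⁻ u in Set.Ioc 1 b, ENNReal.ofReal (Real.exp (-1) * (1/u)) := step2.symm
      _ ≤ ∫⁻ u in Set.Ioc 1 b, F u ω := step1
      _ ≤ ∫⁻ u in Set.Ioi 1, F u ω := lintegral_mono_set Set.Ioc_subset_Ioi_self
    have main : (∫⁻ ω, ENNReal.ofReal (Real.exp (-1) * Real.log (1/(1 - W ω))) ∂ℙ)
        ≤ ENNReal.ofReal C := by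
      calc (∫⁻ ω, ENNReal.ofReal (Real.exp (-1) * Real.log (1/(1 - W ω))) ∂ℙ)
          ≤ ∫⁻ ω, (∫⁻ u in Set.Ioi 1, F u ω) ∂ℙ := lintegral_mono_ae pointwise
      _ = ∫⁻ u in Set.Ioi 1, ∫⁻ ω, F u ω ∂ℙ := tonelli.symm
      _ = ∫⁻ u in Set.Ioi 1, ENNReal.ofReal (g u) := lhs_eq
      _ ≤ ENNReal.ofReal C := claim_Ioi
    have hmeas_inner : Measurable fun ω => ENNReal.ofReal (Real.exp (-1) * Real.log (1/(1 - W ω))) := by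
      apply Measurable.ennreal_ofReal
      exact (Real.measurable_log.comp (measurable_const.div (measurable_const.sub hmeas))).const_mul _
    have fin : (∫⁻ ω, ENNReal.ofReal (Real.log (1/(1 - W ω))) ∂ℙ) < ⊤ := by
      have heq : ∀ᵐ ω ∂ℙ, ENNReal.ofReal (Real.log (1/(1 - W ω))) =
          ENNReal.ofReal (Real.exp 1) * ENNReal.ofReal (Real.exp (-1) * Real.log (1/(1 - W ω))) := by
        filter_upwards [hW] with ω ⟨h0, h1⟩
        rw [← ENNReal.ofReal_mul (Real.exp_nonneg _), ← mul_assoc, ← Real.exp_add]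
        norm_num
      rw [lintegral_congr_ae heq, lintegral_const_mul _ hmeas_inner]
      calc ENNReal.ofReal (Real.exp 1) * ∫⁻ ω, ENNReal.ofReal (Real.exp (-1) * Real.log (1/(1 - W ω))) ∂ℙ
          ≤ ENNReal.ofReal (Real.exp 1) * ENNReal.ofReal C := mul_le_mul_right main _
      _ < ⊤ := ENNReal.mul_lt_top ENNReal.ofReal_lt_top ENNReal.ofReal_lt_top
    apply absurd _ hν
    refine ⟨(Real.measurable_log.comp (measurable_const.sub hmeas)).aestronglyMeasurable, ?_⟩
    rw [hasFiniteIntegral_iff_norm]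
    refine lt_of_le_of_lt (le_of_eq (lintegral_congr_ae ?_)) fin
    filter_upwards [hW] with ω ⟨h0, h1⟩
    congr 1
    rw [Real.norm_eq_abs, abs_of_nonpos (Real.log_nonpos (by linarith) (by linarith)),
      ← Real.log_inv, one_div]
  have hL_top : Tendsto L atTop atTop := tendsto_atTop_atTop_of_monotone hL_mono hL_unbounded
  refine ⟨hL_top, ?_⟩
  -- slow variation
  intro lam hlam
  -- key increment bound: for 1 ≤ a ≤ b, 0 ≤ L b - L a ≤ log (b/a)
  have hkey : ∀ a b : ℝ, 1 ≤ a → a ≤ b → 0 ≤ L b - L a ∧ L b - L a ≤ Real.log (b/a) := by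
    intro a b ha hab
    have hsplit : L b = L a + ∫ u in Set.Ioc a b, g u := by
      rw [hL_def]
      simp only
      rw [← Set.Ioc_union_Ioc_eq_Ioc ha hab,
        setIntegral_union (Set.Ioc_disjoint_Ioc_of_le le_rfl) measurableSet_Ioc (hg_int a)
          ((hg_int b).mono_set (Set.Ioc_subset_Ioc_left ha))]
    have hnn : 0 ≤ ∫ u in Set.Ioc a b, g u := by
      refine setIntegral_nonneg measurableSet_Ioc fun u hu => ?_
      exact hg_nonneg u (lt_of_lt_of_le one_pos (le_trans ha hu.1.le))
    have hub : (∫ u in Set.Ioc a b, g u) ≤ Real.log (b/a) := by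
      have h1 : (∫ u in Set.Ioc a b, g u) ≤ ∫ u in Set.Ioc a b, 1/u := by
        refine setIntegral_mono_on ((hg_int b).mono_set (Set.Ioc_subset_Ioc_left ha))
          (hone_div_int a b ha hab) measurableSet_Ioc fun u hu => ?_
        have hu1 : (1:ℝ) ≤ u := le_trans ha hu.1.le
        have hu0 : (0:ℝ) < u := lt_of_lt_of_le one_pos hu1
        rw [hg_def]
        have h := hφ_le_one u (by linarith)
        show φ u / u ≤ 1 / u
        exact (div_le_div_iff_of_pos_right hu0).2 h
      have h2 : (∫ u in Set.Ioc a b, (1:ℝ)/u) = Real.log (b/a) := by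
        rw [← intervalIntegral.integral_of_le hab]
        exact integral_one_div_of_pos (by linarith) (by linarith)
      linarith
    refine ⟨by linarith, by linarith⟩
  show Tendsto (fun t => L (lam * t) / L t) atTop (nhds 1)
  set c := |Real.log lam| with hc_def
  have hD : ∀ᶠ t in atTop, |L (lam * t) - L t| ≤ c := by
    filter_upwards [eventually_ge_atTop (max 1 (1/lam))] with t ht
    have ht1 : (1:ℝ) ≤ t := le_trans (le_max_left _ _) ht
    have ht2 : 1/lam ≤ t := le_trans (le_max_right _ _) ht
    have hlt : (1:ℝ) ≤ lam * t := by
      rw [div_le_iff₀ hlam] at ht2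
      linarith [ht2]
    have ht0 : (0:ℝ) < t := lt_of_lt_of_le one_pos ht1
    rcases le_total t (lam * t) with h | h
    · obtain ⟨h0, h1⟩ := hkey t (lam * t) ht1 h
      rw [abs_of_nonneg h0]
      refine le_trans h1 ?_
      have he : lam * t / t = lam := by field_simp
      rw [he]
      exact le_abs_self _
    · obtain ⟨h0, h1⟩ := hkey (lam * t) t hlt h
      rw [abs_sub_comm, abs_of_nonneg h0]
      refine le_trans h1 ?_
      have he : t / (lam * t) = lam⁻¹ := by
        field_simp
      rw [he, Real.log_inv]
      exact neg_le_abs _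
  have hLpos : ∀ᶠ t in atTop, 0 < L t := hL_top.eventually_gt_atTop 0
  have hc0 : Tendsto (fun t => c / L t) atTop (nhds 0) :=
    Tendsto.div_atTop tendsto_const_nhds hL_top
  have hlow : Tendsto (fun t => 1 - c / L t) atTop (nhds 1) := by
    have h := (tendsto_const_nhds (x := (1:ℝ)) (f := atTop)).sub hc0
    simpa using h
  have hhigh : Tendsto (fun t => 1 + c / L t) atTop (nhds 1) := by
    have h := (tendsto_const_nhds (x := (1:ℝ)) (f := atTop)).add hc0
    simpa using h
  refine tendsto_of_tendsto_of_tendsto_of_le_of_le' hlow hhigh ?_ ?_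
  · filter_upwards [hD, hLpos] with t hDt hLt
    rw [le_div_iff₀ hLt, sub_mul, one_mul, div_mul_cancel₀ _ (ne_of_gt hLt)]
    have := abs_le.1 hDt
    linarith [this.1, this.2]
  · filter_upwards [hD, hLpos] with t hDt hLt
    rw [div_le_iff₀ hLt, add_mul, one_mul, div_mul_cancel₀ _ (ne_of_gt hLt)]
    have := abs_le.1 hDt
    linarith [this.1, this.2]
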